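/- Let ℓ ≥ 2 and r ≥ 1 be integers with ℓ ≥ r(r+1), and let t ≥ 1. For every subgraph B' of the braid graph B(ℓ, r, t) with at least one edge, e_{B'} ≤ (ℓ/2)·(v_{B'} − 1). Consequently, the maximum of e_H/(v_H − 1) over subgraphs H of B(ℓ, r, t) with at least one edge equals ℓ/2, attained by K_ℓ. -/

import Mathlib

open Finset


/-- The braid graph `B(ℓ, r, t)`: `t` vertex-disjoint ordered copies of `K_ℓ`
(vertex `(i, a)` is the `a`-th vertex of the `i`-th clique), where for each pair
of consecutive cliques the last `r` vertices `v_1, …, v_r` of the first and the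
first `r` vertices `u_1, …, u_r` of the second are `r`-bridged: `v_j` is adjacent
to `u_1, …, u_j`.  With `v_j` at position `a = ℓ - r + (j-1)` and `u_{j'}` at
position `b = j' - 1`, the bridge condition `j' ≤ j` reads `b + ℓ ≤ a + r`. -/
def braid (ℓ r t : ℕ) : SimpleGraph (Fin t × Fin ℓ) where
  Adj x y :=
    (x.1 = y.1 ∧ x.2 ≠ y.2) ∨
    ((x.1 : ℕ) + 1 = (y.1 : ℕ) ∧ (y.2 : ℕ) + ℓ ≤ (x.2 : ℕ) + r) ∨
    ((y.1 : ℕ) + 1 = (x.1 : ℕ) ∧ (x.2 : ℕ) + ℓ ≤ (y.2 : ℕ) + r)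
  symm := ⟨by
    intro x y h
    rcases h with ⟨h1, h2⟩ | ⟨h1, h2⟩ | ⟨h1, h2⟩
    · exact Or.inl ⟨h1.symm, h2.symm⟩
    · exact Or.inr (Or.inr ⟨h1, h2⟩)
    · exact Or.inr (Or.inl ⟨h1, h2⟩)⟩
  loopless := ⟨by
    intro x h
    rcases h with ⟨_, h⟩ | ⟨h, _⟩ | ⟨h, _⟩
    · exact h rfl
    · omega
    · omega⟩


lemma choose_two_mul_two (n : ℕ) : n.choose 2 * 2 = n * (n - 1) := by
  rw [Nat.choose_two_right]
  exact Nat.div_mul_cancel (Nat.even_mul_pred_self n).two_dvd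

def pfin {V : Type*} [DecidableEq V] : Sym2 V → Finset V :=
  Sym2.lift ⟨fun x y => {x, y}, fun x y => Finset.pair_comm x y⟩

lemma pair_eq_sym2 {V : Type*} [DecidableEq V] {x y x' y' : V} (hxy : x ≠ y)
    (h : ({x, y} : Finset V) = {x', y'}) : s(x, y) = s(x', y') := by
  have hx : x = x' ∨ x = y' := by
    have : x ∈ ({x', y'} : Finset V) := h ▸ Finset.mem_insert_self x {y}
    simpa using this
  have hy : y = x' ∨ y = y' := by
    have : y ∈ ({x', y'} : Finset V) :=
      h ▸ Finset.mem_insert_of_mem (Finset.mem_singleton_self y)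
    simpa using this
  rw [Sym2.eq_iff]
  rcases hx with h1 | h1 <;> rcases hy with h2 | h2 <;>
    first
      | exact absurd (h1.trans h2.symm) hxy
      | tauto

def pkey {t ℓ : ℕ} : Sym2 (Fin t × Fin ℓ) → ℕ × Bool :=
  Sym2.lift ⟨fun x y => ((min (x.1 : ℕ) (y.1 : ℕ)), decide ((x.1 : ℕ) = (y.1 : ℕ))),
    by
      intro x y
      dsimp only
      rw [min_comm, show (decide ((x.1:ℕ)=(y.1:ℕ))) = decide ((y.1:ℕ)=(x.1:ℕ)) from
        decide_eq_decide.mpr eq_comm]⟩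

def ppos {t ℓ : ℕ} : Sym2 (Fin t × Fin ℓ) → Fin ℓ × Fin ℓ :=
  Sym2.lift ⟨fun x y => if (x.1:ℕ) < (y.1:ℕ) then (x.2, y.2)
      else if (y.1:ℕ) < (x.1:ℕ) then (y.2, x.2) else (min x.2 y.2, min x.2 y.2),
    by
      intro x y
      dsimp only
      rcases lt_trichotomy (x.1:ℕ) (y.1:ℕ) with h|h|h
      · simp [h, asymm h]
      · simp [h, min_comm]
      · simp [h, asymm h]⟩

lemma braid_main {ℓ r t : ℕ} (hl : 2 ≤ ℓ) (hr : 1 ≤ r) (hlr : r * (r + 1) ≤ ℓ)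
    (B' : (braid ℓ r t).Subgraph) (hE : B'.edgeSet.Nonempty) :
    2 * B'.edgeSet.ncard ≤ ℓ * (B'.verts.ncard - 1) ∧ 1 ≤ B'.verts.ncard := by
  classical
  set E : Finset (Sym2 (Fin t × Fin ℓ)) := B'.edgeSet.toFinset with hEdef
  set VF : Finset (Fin t × Fin ℓ) := B'.verts.toFinset with hVFdef
  have hEcard : B'.edgeSet.ncard = E.card := Set.ncard_eq_toFinset_card' _
  have hVcard : B'.verts.ncard = VF.card := Set.ncard_eq_toFinset_card' _
  set Vi : ℕ → Finset (Fin t × Fin ℓ) := fun i => VF.filter (fun x => (x.1:ℕ) = i) with hVidef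
  set S : Finset ℕ := VF.image (fun x => (x.1:ℕ)) with hSdef
  set K : Finset (ℕ × Bool) := E.image pkey with hKdef
  set fib : ℕ × Bool → Finset (Sym2 (Fin t × Fin ℓ)) :=
    fun k => E.filter (fun e => pkey e = k) with hfibdef
  have hadj : ∀ x y : Fin t × Fin ℓ, B'.Adj x y →
      (x.1 = y.1 ∧ x.2 ≠ y.2) ∨
      ((x.1 : ℕ) + 1 = (y.1 : ℕ) ∧ (y.2 : ℕ) + ℓ ≤ (x.2 : ℕ) + r) ∨
      ((y.1 : ℕ) + 1 = (x.1 : ℕ) ∧ (x.2 : ℕ) + ℓ ≤ (y.2 : ℕ) + r) :=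
    fun x y h => B'.adj_sub h
  -- Step 1 : fiberwise count
  have step1 : E.card = ∑ k ∈ K, (fib k).card :=
    Finset.card_eq_sum_card_fiberwise (fun e he => Finset.mem_image_of_mem _ he)
  -- Step 2 : internal bound
  have step2 : ∀ i : ℕ, 2 * (fib (i, true)).card ≤ ℓ * ((Vi i).card - 1) := by
    intro i
    have hmem : ∀ x y : Fin t × Fin ℓ, s(x,y) ∈ fib (i, true) →
        B'.Adj x y ∧ (x.1:ℕ) = i ∧ (y.1:ℕ) = i ∧ x ≠ y := by
      intro x y he
      simp only [hfibdef, Finset.mem_filter, hEdef, Set.mem_toFinset, pkey, Sym2.lift_mk,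
        Prod.mk.injEq, decide_eq_true_eq] at he
      obtain ⟨hm, hmin, hfst⟩ := he
      have hxy : B'.Adj x y := hm
      exact ⟨hxy, by omega, by omega, (B'.adj_sub hxy).ne⟩
    have hmaps : ∀ e ∈ fib (i, true), pfin e ∈ (Vi i).powersetCard 2 := by
      intro e he
      induction e using Sym2.ind with
      | _ x y =>
        obtain ⟨hxy, hx1, hy1, hne⟩ := hmem x y he
        simp only [pfin, Sym2.lift_mk]
        rw [Finset.mem_powersetCard]
        refine ⟨?_, Finset.card_pair hne⟩
        intro z hz
        rcases Finset.mem_insert.mp hz with h | h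
        · subst h
          simp only [hVidef, Finset.mem_filter, hVFdef, Set.mem_toFinset]
          exact ⟨B'.edge_vert hxy, hx1⟩
        · rw [Finset.mem_singleton] at h; subst h
          simp only [hVidef, Finset.mem_filter, hVFdef, Set.mem_toFinset]
          exact ⟨B'.edge_vert hxy.symm, hy1⟩
    have hinj : Set.InjOn pfin (↑(fib (i, true)) : Set (Sym2 (Fin t × Fin ℓ))) := by
      intro e he e' he' heq
      induction e using Sym2.ind with
      | _ x y =>
        induction e' using Sym2.ind with
        | _ x' y' =>
          obtain ⟨_, _, _, hne⟩ := hmem x y (Finset.mem_coe.mp he)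
          simp only [pfin, Sym2.lift_mk] at heq
          exact pair_eq_sym2 hne heq
    have h1 : (fib (i, true)).card ≤ ((Vi i).powersetCard 2).card :=
      Finset.card_le_card_of_injOn pfin hmaps hinj
    rw [Finset.card_powersetCard] at h1
    have h2 : (Vi i).card ≤ ℓ := by
      calc (Vi i).card ≤ (Finset.univ : Finset (Fin ℓ)).card := by
            apply Finset.card_le_card_of_injOn (fun x => x.2) (fun x _ => Finset.mem_univ _)
            intro x hx y hy hxy
            simp only [hVidef, Finset.coe_filter, Set.mem_setOf_eq] at hx hy
            exact Prod.ext (Fin.val_injective (hx.2.trans hy.2.symm)) hxy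
        _ = ℓ := by simp
    have h3 := choose_two_mul_two (Vi i).card
    have h4 : (Vi i).card * ((Vi i).card - 1) ≤ ℓ * ((Vi i).card - 1) :=
      Nat.mul_le_mul_right _ h2
    omega
  -- Step 3 : bridge bound
  have step3 : ∀ i : ℕ, 2 * (fib (i, false)).card ≤ ℓ := by
    set P : Finset (Fin ℓ × Fin ℓ) :=
      Finset.univ.filter (fun p => (p.2:ℕ) + ℓ ≤ (p.1:ℕ) + r) with hPdef
    have hPcard : P.card * 2 ≤ r * (r + 1) := by
      set T : Finset (ℕ × ℕ) := (range r ×ˢ range r).filter (fun p => p.2 ≤ p.1) with hTdef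
      have h1 : P.card ≤ T.card := by
        apply Finset.card_le_card_of_injOn (fun p => ((p.1:ℕ) + r - ℓ, (p.2:ℕ)))
        · intro p hp
          simp only [hPdef, Finset.mem_coe, Finset.mem_filter, Finset.mem_univ, true_and] at hp
          simp only [hTdef, Finset.mem_coe, Finset.mem_filter, Finset.mem_product, Finset.mem_range]
          have h1 := p.1.isLt
          have h2 := p.2.isLt
          omega
        · intro p hp q hq hpq
          simp only [hPdef, Finset.coe_filter, Set.mem_setOf_eq, Finset.mem_univ,
            true_and] at hp hq
          simp only [Prod.mk.injEq] at hpq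
          have h1 := p.1.isLt
          have h2 := q.1.isLt
          have hfst : (p.1:ℕ) = (q.1:ℕ) := by omega
          exact Prod.ext (Fin.val_injective hfst) (Fin.val_injective hpq.2)
      have h2 : T.card = ∑ k ∈ range r, (k + 1) := by
        rw [Finset.card_eq_sum_card_fiberwise (f := Prod.fst) (t := range r)
          (fun p hp => by
            simp only [hTdef, Finset.mem_coe, Finset.mem_filter, Finset.mem_product] at hp
            exact hp.1.1)]
        refine Finset.sum_congr rfl fun k hk => ?_
        rw [Finset.mem_range] at hk
        have heq : (T.filter fun p => p.1 = k) = (range (k+1)).image (fun b => (k, b)) := by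
          ext p
          simp only [hTdef, Finset.mem_filter, Finset.mem_product, Finset.mem_range,
            Finset.mem_image]
          constructor
          · rintro ⟨⟨⟨ha, hb⟩, hba⟩, hfst⟩
            exact ⟨p.2, by omega, by rw [← hfst]⟩
          · rintro ⟨b, hb, rfl⟩
            exact ⟨⟨⟨hk, by omega⟩, by omega⟩, rfl⟩
        rw [heq, Finset.card_image_of_injective _ (fun a b h => by simpa using h)]
        simp
      have h3 := Finset.sum_range_id_mul_two (r + 1)
      have h4 : ∑ i ∈ range (r+1), i = ∑ k ∈ range r, (k+1) := by
        rw [Finset.sum_range_succ' (fun i => i) r]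
        simp
      have h5 : (r + 1) * (r + 1 - 1) = r * (r + 1) := by
        rw [Nat.add_sub_cancel, Nat.mul_comm]
      omega
    intro i
    have hnf : ∀ e ∈ fib (i, false), ∃ (h1 : i < t) (h2 : i + 1 < t),
        e = s(((⟨i, h1⟩ : Fin t), (ppos e).1), ((⟨i+1, h2⟩ : Fin t), (ppos e).2)) ∧
        ((ppos e).2 : ℕ) + ℓ ≤ ((ppos e).1 : ℕ) + r := by
      intro e he
      induction e using Sym2.ind with
      | _ x y =>
        simp only [hfibdef, Finset.mem_filter, hEdef, Set.mem_toFinset, pkey, Sym2.lift_mk,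
          Prod.mk.injEq, decide_eq_false_iff_not] at he
        obtain ⟨hm, hmin, hfst⟩ := he
        have hxy : B'.Adj x y := hm
        rcases hadj x y hxy with ⟨h1, _⟩ | ⟨h1, h2⟩ | ⟨h1, h2⟩
        · exact absurd (congrArg Fin.val h1) hfst
        · have hlt : (x.1:ℕ) < (y.1:ℕ) := by omega
          have hpos : ppos s(x, y) = (x.2, y.2) := by
            simp only [ppos, Sym2.lift_mk]
            rw [if_pos hlt]
          have hi1 : i < t := by have := x.1.isLt; omega
          have hi2 : i + 1 < t := by have := y.1.isLt; omega
          refine ⟨hi1, hi2, ?_, ?_⟩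
          · rw [hpos]
            have hx : x = ((⟨i, hi1⟩ : Fin t), x.2) := Prod.ext (Fin.ext (show (x.1:ℕ) = i by omega)) rfl
            have hy : y = ((⟨i+1, hi2⟩ : Fin t), y.2) := Prod.ext (Fin.ext (show (y.1:ℕ) = i + 1 by omega)) rfl
            rw [← hx, ← hy]
          · rw [hpos]; exact h2
        · have hlt : (y.1:ℕ) < (x.1:ℕ) := by omega
          have hnlt : ¬ (x.1:ℕ) < (y.1:ℕ) := by omega
          have hpos : ppos s(x, y) = (y.2, x.2) := by
            simp only [ppos, Sym2.lift_mk]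
            rw [if_neg hnlt, if_pos hlt]
          have hi1 : i < t := by have := y.1.isLt; omega
          have hi2 : i + 1 < t := by have := x.1.isLt; omega
          refine ⟨hi1, hi2, ?_, ?_⟩
          · rw [hpos]
            have hx : y = ((⟨i, hi1⟩ : Fin t), y.2) := Prod.ext (Fin.ext (show (y.1:ℕ) = i by omega)) rfl
            have hy : x = ((⟨i+1, hi2⟩ : Fin t), x.2) := Prod.ext (Fin.ext (show (x.1:ℕ) = i + 1 by omega)) rfl
            rw [← hx, ← hy, Sym2.eq_swap]
          · rw [hpos]; exact h2
    have hcard : (fib (i, false)).card ≤ P.card := by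
      apply Finset.card_le_card_of_injOn ppos
      · intro e he
        obtain ⟨_, _, _, hle⟩ := hnf e he
        simp only [hPdef, Finset.mem_coe, Finset.mem_filter, Finset.mem_univ, true_and]
        exact hle
      · intro e he e' he' heq
        obtain ⟨ha1, ha2, he1, _⟩ := hnf e (Finset.mem_coe.mp he)
        obtain ⟨hb1, hb2, he1', _⟩ := hnf e' (Finset.mem_coe.mp he')
        rw [he1, he1', heq]
    omega
  -- Step 4
  have step4a : ∀ i : ℕ, (i, true) ∈ K → i ∈ S := by
    intro i hi
    rw [hKdef, Finset.mem_image] at hi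
    obtain ⟨e, he, hkey⟩ := hi
    induction e using Sym2.ind with
    | _ x y =>
      simp only [pkey, Sym2.lift_mk, Prod.mk.injEq, decide_eq_true_eq] at hkey
      rw [hEdef, Set.mem_toFinset] at he
      have hxy : B'.Adj x y := he
      rw [hSdef, Finset.mem_image]
      refine ⟨x, by rw [hVFdef, Set.mem_toFinset]; exact B'.edge_vert hxy, by omega⟩
  have step4b : ∀ i : ℕ, (i, false) ∈ K → i ∈ S ∧ i + 1 ∈ S := by
    intro i hi
    rw [hKdef, Finset.mem_image] at hi
    obtain ⟨e, he, hkey⟩ := hi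
    induction e using Sym2.ind with
    | _ x y =>
      simp only [pkey, Sym2.lift_mk, Prod.mk.injEq, decide_eq_false_iff_not] at hkey
      obtain ⟨hmin, hfst⟩ := hkey
      rw [hEdef, Set.mem_toFinset] at he
      have hxy : B'.Adj x y := he
      have hxS : (x.1:ℕ) ∈ S := by
        rw [hSdef]
        exact Finset.mem_image_of_mem _ (by rw [hVFdef, Set.mem_toFinset]; exact B'.edge_vert hxy)
      have hyS : (y.1:ℕ) ∈ S := by
        rw [hSdef]
        exact Finset.mem_image_of_mem _
          (by rw [hVFdef, Set.mem_toFinset]; exact B'.edge_vert hxy.symm)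
      rcases hadj x y hxy with ⟨h1, _⟩ | ⟨h1, _⟩ | ⟨h1, _⟩
      · exact absurd (congrArg Fin.val h1) hfst
      · exact ⟨by rwa [show i = (x.1:ℕ) from by omega],
          by rwa [show i + 1 = (y.1:ℕ) from by omega]⟩
      · exact ⟨by rwa [show i = (y.1:ℕ) from by omega],
          by rwa [show i + 1 = (x.1:ℕ) from by omega]⟩
  -- assembly
  obtain ⟨e0, he0⟩ := hE
  have hS : S.Nonempty := by
    induction e0 using Sym2.ind with
    | _ x y =>
      have hxy : B'.Adj x y := he0
      exact ⟨(x.1:ℕ), Finset.mem_image_of_mem _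
        (by rw [hVFdef, Set.mem_toFinset]; exact B'.edge_vert hxy)⟩
  have hVsum : VF.card = ∑ i ∈ S, (Vi i).card :=
    Finset.card_eq_sum_card_fiberwise (fun x hx => Finset.mem_image_of_mem _ hx)
  have hVi1 : ∀ i ∈ S, 1 ≤ (Vi i).card := by
    intro i hi
    rw [hSdef, Finset.mem_image] at hi
    obtain ⟨x, hx, hxe⟩ := hi
    exact Finset.card_pos.mpr ⟨x, Finset.mem_filter.mpr ⟨hx, hxe⟩⟩
  set Kt := K.filter (fun k => k.2 = true) with hKt
  set Kf := K.filter (fun k => k.2 = false) with hKf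
  have hsplit : ∑ k ∈ K, (fib k).card = ∑ k ∈ Kt, (fib k).card + ∑ k ∈ Kf, (fib k).card := by
    rw [hKt, hKf, ← Finset.sum_filter_add_sum_filter_not K (fun k => k.2 = true)]
    congr 2
    ext k
    simp [Bool.not_eq_true]
  have hIbound : ∑ k ∈ Kt, 2 * (fib k).card ≤ ∑ i ∈ S, ℓ * ((Vi i).card - 1) := by
    have h1 : ∑ k ∈ Kt, 2 * (fib k).card ≤ ∑ k ∈ Kt, ℓ * ((Vi k.1).card - 1) := by
      apply Finset.sum_le_sum
      intro k hk
      have hk2 : k = (k.1, true) := by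
        rw [hKt, Finset.mem_filter] at hk
        exact Prod.ext rfl hk.2
      calc 2 * (fib k).card = 2 * (fib (k.1, true)).card := by rw [← hk2]
        _ ≤ ℓ * ((Vi k.1).card - 1) := step2 k.1
    refine h1.trans ?_
    have h2 : ∑ k ∈ Kt, ℓ * ((Vi k.1).card - 1)
        = ∑ i ∈ Kt.image Prod.fst, ℓ * ((Vi i).card - 1) := by
      rw [Finset.sum_image]
      intro k hk k' hk' hkk
      rw [hKt, Finset.mem_coe, Finset.mem_filter] at hk hk'
      exact Prod.ext hkk (hk.2.trans hk'.2.symm)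
    rw [h2]
    apply Finset.sum_le_sum_of_subset_of_nonneg
    · intro i hi
      rw [Finset.mem_image] at hi
      obtain ⟨k, hk, rfl⟩ := hi
      rw [hKt, Finset.mem_filter] at hk
      have hk2 : k = (k.1, true) := Prod.ext rfl hk.2
      exact step4a k.1 (hk2 ▸ hk.1)
    · exact fun _ _ _ => Nat.zero_le _
  have hm := S.max'_mem hS
  have hBcard : Kf.card ≤ S.card - 1 := by
    have h1 : Kf.card ≤ (S.erase (S.max' hS)).card := by
      apply Finset.card_le_card_of_injOn Prod.fst
      · intro k hk
        rw [hKf, Finset.mem_coe, Finset.mem_filter] at hk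
        have hk2 : k = (k.1, false) := Prod.ext rfl hk.2
        obtain ⟨hS1, hS2⟩ := step4b k.1 (hk2 ▸ hk.1)
        refine Finset.mem_erase.mpr ⟨?_, hS1⟩
        have := S.le_max' (k.1 + 1) hS2
        omega
      · intro k hk k' hk' hkk
        simp only [hKf, Finset.coe_filter, Set.mem_setOf_eq] at hk hk'
        exact Prod.ext hkk (hk.2.trans hk'.2.symm)
    rwa [Finset.card_erase_of_mem hm] at h1
  have hBbound : ∑ k ∈ Kf, 2 * (fib k).card ≤ ℓ * Kf.card := by
    calc ∑ k ∈ Kf, 2 * (fib k).card ≤ ∑ _k ∈ Kf, ℓ := by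
          apply Finset.sum_le_sum
          intro k hk
          rw [hKf, Finset.mem_filter] at hk
          have hk2 : k = (k.1, false) := Prod.ext rfl hk.2
          calc 2 * (fib k).card = 2 * (fib (k.1, false)).card := by rw [← hk2]
            _ ≤ ℓ := step3 k.1
      _ = ℓ * Kf.card := by rw [Finset.sum_const, smul_eq_mul, Nat.mul_comm]
  have hVtot : ∑ i ∈ S, ((Vi i).card - 1) + S.card = VF.card := by
    rw [hVsum, Finset.card_eq_sum_ones, ← Finset.sum_add_distrib]
    exact Finset.sum_congr rfl (fun i hi => Nat.sub_add_cancel (hVi1 i hi))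
  have hScard : 1 ≤ S.card := Finset.card_pos.mpr hS
  have hfinal : 2 * E.card ≤ ℓ * (VF.card - 1) := by
    have e1 : 2 * E.card = ∑ k ∈ Kt, 2 * (fib k).card + ∑ k ∈ Kf, 2 * (fib k).card := by
      rw [step1, hsplit, Nat.mul_add, Finset.mul_sum, Finset.mul_sum]
    have e2 : ∑ i ∈ S, ℓ * ((Vi i).card - 1) = ℓ * ∑ i ∈ S, ((Vi i).card - 1) :=
      (Finset.mul_sum _ _ _).symm
    have e3 : ℓ * Kf.card ≤ ℓ * (S.card - 1) := Nat.mul_le_mul_left _ hBcard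
    calc 2 * E.card = ∑ k ∈ Kt, 2 * (fib k).card + ∑ k ∈ Kf, 2 * (fib k).card := e1
      _ ≤ ℓ * ∑ i ∈ S, ((Vi i).card - 1) + ℓ * Kf.card :=
          Nat.add_le_add (hIbound.trans_eq e2) hBbound
      _ ≤ ℓ * ∑ i ∈ S, ((Vi i).card - 1) + ℓ * (S.card - 1) := Nat.add_le_add_left e3 _
      _ = ℓ * (∑ i ∈ S, ((Vi i).card - 1) + (S.card - 1)) := (Nat.mul_add _ _ _).symm
      _ = ℓ * (VF.card - 1) := by congr 1; omega
  constructor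
  · rw [hEcard, hVcard]; exact hfinal
  · rw [hVcard]; omega

lemma choose_two_mul_two' (n : ℕ) : n.choose 2 * 2 = n * (n - 1) := by
  rw [Nat.choose_two_right]
  exact Nat.div_mul_cancel (Nat.even_mul_pred_self n).two_dvd

lemma part2 (ℓ r t : ℕ) (hl : 2 ≤ ℓ) (ht : 1 ≤ t) :
    (∃ H : (braid ℓ r t).Subgraph, 1 ≤ H.edgeSet.ncard ∧
      (H.edgeSet.ncard : ℝ) = ((ℓ : ℝ) / 2) * ((H.verts.ncard : ℝ) - 1)) := by
  classical
  set i0 : Fin t := ⟨0, ht⟩ with hi0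
  set f : Fin ℓ → Fin t × Fin ℓ := fun a => (i0, a) with hf
  have hfinj : Function.Injective f := fun a b h => congrArg Prod.snd h
  set H : (braid ℓ r t).Subgraph :=
    { verts := {x | x.1 = i0},
      Adj := fun x y => x.1 = i0 ∧ y.1 = i0 ∧ x.2 ≠ y.2,
      adj_sub := fun h => Or.inl ⟨h.1.trans h.2.1.symm, h.2.2⟩,
      edge_vert := fun h => h.1,
      symm := ⟨fun x y h => ⟨h.2.1, h.1, h.2.2.symm⟩⟩ } with hH
  have hv : H.verts.ncard = ℓ := by
    have hset : H.verts = f '' Set.univ := by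
      ext z
      simp only [hH, Set.mem_setOf_eq, Set.image_univ, Set.mem_range, hf]
      constructor
      · intro h
        exact ⟨z.2, Prod.ext h.symm rfl⟩
      · rintro ⟨a, rfl⟩
        rfl
    rw [hset, Set.ncard_image_of_injective _ hfinj, Set.ncard_univ, Nat.card_eq_fintype_card,
      Fintype.card_fin]
  have hedge : H.edgeSet = Sym2.map f '' (⊤ : SimpleGraph (Fin ℓ)).edgeSet := by
    ext e
    induction e using Sym2.ind with
    | _ x y =>
      constructor
      · intro h
        obtain ⟨hx, hy, hne⟩ : x.1 = i0 ∧ y.1 = i0 ∧ x.2 ≠ y.2 :=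
          SimpleGraph.Subgraph.mem_edgeSet.mp h
        refine ⟨s(x.2, y.2), ?_, ?_⟩
        · rw [SimpleGraph.mem_edgeSet]
          simpa using hne
        · rw [Sym2.map_pair_eq]
          have h1 : f x.2 = x := Prod.ext hx.symm rfl
          have h2 : f y.2 = y := Prod.ext hy.symm rfl
          rw [h1, h2]
      · rintro ⟨e', he', heq⟩
        induction e' using Sym2.ind with
        | _ a b =>
          rw [SimpleGraph.mem_edgeSet, SimpleGraph.top_adj] at he'
          rw [Sym2.map_pair_eq] at heq
          rw [← heq]
          exact SimpleGraph.Subgraph.mem_edgeSet.mpr ⟨rfl, rfl, by simpa using he'⟩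
  have hecount : H.edgeSet.ncard = ℓ.choose 2 := by
    rw [hedge, Set.ncard_image_of_injective _ (Sym2.map.injective hfinj)]
    have h1 : (⊤ : SimpleGraph (Fin ℓ)).edgeSet.ncard
        = (⊤ : SimpleGraph (Fin ℓ)).edgeFinset.card := by
      rw [SimpleGraph.edgeFinset, Set.ncard_eq_toFinset_card']
    rw [h1, SimpleGraph.card_edgeFinset_top_eq_card_choose_two, Fintype.card_fin]
  refine ⟨H, ?_, ?_⟩
  · rw [hecount]
    exact Nat.succ_le_of_lt (Nat.choose_pos hl)
  · rw [hecount, hv]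
    have h2 := choose_two_mul_two' ℓ
    have h3 : ((ℓ.choose 2 : ℕ) : ℝ) * 2 = (ℓ : ℝ) * ((ℓ : ℝ) - 1) := by
      have : ((ℓ.choose 2 * 2 : ℕ) : ℝ) = ((ℓ * (ℓ - 1) : ℕ) : ℝ) := congrArg (fun n : ℕ => (n : ℝ)) h2
      push_cast [Nat.cast_sub (by omega : 1 ≤ ℓ)] at this
      linarith
    linarith

theorem stmt8 (ℓ r t : ℕ) (hl : 2 ≤ ℓ) (hr : 1 ≤ r) (hlr : r * (r + 1) ≤ ℓ)
    (ht : 1 ≤ t) :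
    (∀ B' : (braid ℓ r t).Subgraph, 1 ≤ B'.edgeSet.ncard →
      (B'.edgeSet.ncard : ℝ) ≤ ((ℓ : ℝ) / 2) * ((B'.verts.ncard : ℝ) - 1)) ∧
    (∃ H : (braid ℓ r t).Subgraph, 1 ≤ H.edgeSet.ncard ∧
      (H.edgeSet.ncard : ℝ) = ((ℓ : ℝ) / 2) * ((H.verts.ncard : ℝ) - 1)) := by
  constructor
  · intro B' hB
    have hne : B'.edgeSet.Nonempty := by
      rw [← Set.ncard_pos (Set.toFinite _)]; omega
    obtain ⟨h2e, h1v⟩ := braid_main hl hr hlr B' hne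
    have hcast := (Nat.cast_le (α := ℝ)).mpr h2e
    rw [Nat.cast_mul, Nat.cast_mul, Nat.cast_sub h1v] at hcast
    push_cast at hcast ⊢
    linarith
  · exact part2 ℓ r t hl ht
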